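/- arXiv:2207.03922 — 2 statements merged into one kernel-verified Lean document; each statement's English description precedes it below -/
import Mathlib

section
/- Define u₀ := 0 and u_{n+1} := L(u_n). Then for every n ∈ ℕ, every finite sequence (i₁,…,i_n) ∈ {0,1,2,3}ⁿ and every x ∈ Q_{i₁,…,i_n}, one has u_n(x) = Σ_{j=1}^{n} i_j·4^{−j}. In particular, u_n is constant on each half-open dyadic square of side length 2^{−n} contained in [0,1)². -/
open MeasureTheory Set Filter
open scoped ENNReal NNReal

noncomputable section

/-- The half-open unit square `[0,1)²` in `ℝ²`. -/
def unitSq : Set (ℝ × ℝ) := Set.Ico (0:ℝ) 1 ×ˢ Set.Ico (0:ℝ) 1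

/-- The four contractions `B₀, B₁, B₂, B₃` mapping `[0,1)²` onto its four half-open
dyadic subsquares (lower-left, lower-right, upper-left, upper-right). -/
def Bmap (i : Fin 4) (x : ℝ × ℝ) : ℝ × ℝ :=
  (x.1 / 2 + (if i.val % 2 = 1 then (1:ℝ)/2 else 0),
   x.2 / 2 + (if 2 ≤ i.val then (1:ℝ)/2 else 0))

/-- The inverse maps `A₀, A₁, A₂, A₃` of `B₀, …, B₃`. -/
def Amap (i : Fin 4) (x : ℝ × ℝ) : ℝ × ℝ :=
  (2 * x.1 - (if i.val % 2 = 1 then (1:ℝ) else 0),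
   2 * x.2 - (if 2 ≤ i.val then (1:ℝ) else 0))

/-- The four half-open dyadic subsquares `Q₀, Q₁, Q₂, Q₃` of `[0,1)²`. -/
def Qsub (i : Fin 4) : Set (ℝ × ℝ) := Bmap i '' unitSq

/-- The step function `ū = Σ_{i=0}^{3} (i/4)·1_{Q_i}`. -/
def ubar (x : ℝ × ℝ) : ℝ :=
  ∑ i : Fin 4, ((i.val : ℝ) / 4) * (Qsub i).indicator (fun _ => (1:ℝ)) x

/-- The operator `L`: `(Lv)(x) = ū(x) + (1/4) Σ_i v(A_i x)·1_{Q_i}(x)` on `[0,1)²`,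
extended by `0` outside. -/
def Lop (v : ℝ × ℝ → ℝ) : ℝ × ℝ → ℝ :=
  unitSq.indicator fun x =>
    ubar x + (1/4) * ∑ i : Fin 4, (Qsub i).indicator (fun y => v (Amap i y)) x

/-- The `j`-th binary digit `a_j(s) = ⌊2^j s⌋ − 2⌊2^{j−1} s⌋` of `s ∈ [0,1)` (`j ≥ 1`). -/
def bdigit (j : ℕ) (s : ℝ) : ℤ := ⌊(2:ℝ)^j * s⌋ - 2 * ⌊(2:ℝ)^(j-1) * s⌋

/-- The `j`-th quadrant digit `i_j(x) = a_j(x₁) + 2 a_j(x₂) ∈ {0,1,2,3}` of `x ∈ [0,1)²`. -/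
def qdigit (j : ℕ) (x : ℝ × ℝ) : ℤ := bdigit j x.1 + 2 * bdigit j x.2

/-- The Flat Mountain function `u(x) = Σ_{j≥1} i_j(x)·4^{−j}` on `[0,1)²`, `0` outside. -/
def uFM : ℝ × ℝ → ℝ :=
  unitSq.indicator fun x => ∑' j : ℕ, (qdigit (j+1) x : ℝ) / 4^(j+1)

/-- The iterates `u₀ = 0`, `u_{n+1} = L u_n`. -/
def uIter : ℕ → ℝ × ℝ → ℝ
  | 0 => fun _ => 0
  | (n+1) => Lop (uIter n)

/-- The dyadic square `Q_{i₁,…,i_n} = B_{i₁} ∘ ⋯ ∘ B_{i_n} ([0,1)²)` indexed by a finite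
sequence of quadrant digits. -/
def Qseq : List (Fin 4) → Set (ℝ × ℝ)
  | [] => unitSq
  | (i :: l) => Bmap i '' Qseq l

/-- The `j`-th base-4 digit `t_j = ⌊4^j t⌋ − 4⌊4^{j−1} t⌋` of `t ∈ [0,1)` (`j ≥ 1`). -/
def tdigit (j : ℕ) (t : ℝ) : ℤ := ⌊(4:ℝ)^j * t⌋ - 4 * ⌊(4:ℝ)^(j-1) * t⌋

/-- The Lebesgue (Z-order) space-filling curve `γ`. -/
def lcurve (t : ℝ) : ℝ × ℝ :=
  (∑' j : ℕ, ((tdigit (j+1) t % 2 : ℤ) : ℝ) / 2^(j+1),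
   ∑' j : ℕ, ((tdigit (j+1) t / 2 : ℤ) : ℝ) / 2^(j+1))

end

lemma Amap_Bmap (i : Fin 4) (x : ℝ × ℝ) : Amap i (Bmap i x) = x := by
  simp only [Amap, Bmap]
  split_ifs <;> · ext <;> simp <;> ring

lemma mem_Qsub_iff (i : Fin 4) (x : ℝ × ℝ) :
    x ∈ Qsub i ↔
      ((if i.val % 2 = 1 then (1:ℝ)/2 ≤ x.1 ∧ x.1 < 1 else 0 ≤ x.1 ∧ x.1 < 1/2)) ∧
      ((if 2 ≤ i.val then (1:ℝ)/2 ≤ x.2 ∧ x.2 < 1 else 0 ≤ x.2 ∧ x.2 < 1/2)) := by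
  constructor
  · rintro ⟨y, ⟨⟨h1, h2⟩, h3, h4⟩, rfl⟩
    simp only [Bmap]
    split_ifs <;> constructor <;> constructor <;> linarith
  · rintro ⟨h1, h2⟩
    refine ⟨Amap i x, ⟨?_, ?_⟩, ?_⟩
    · simp only [Amap, Set.mem_Ico]
      split_ifs at h1 ⊢ <;> constructor <;> linarith [h1.1, h1.2]
    · simp only [Amap, Set.mem_Ico]
      split_ifs at h2 ⊢ <;> constructor <;> linarith [h2.1, h2.2]
    · simp only [Bmap, Amap]
      split_ifs <;> · ext <;> simp <;> ring

lemma Qsub_subset_unitSq (i : Fin 4) : Qsub i ⊆ unitSq := by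
  intro x hx
  rw [mem_Qsub_iff] at hx
  obtain ⟨h1, h2⟩ := hx
  constructor <;> simp only [Set.mem_Ico] <;> [skip; skip] <;> split_ifs at h1 h2 <;>
    constructor <;> linarith [h1.1, h1.2, h2.1, h2.2]

lemma Qsub_eq_of_mem {i k : Fin 4} {x : ℝ × ℝ} (hi : x ∈ Qsub i) (hk : x ∈ Qsub k) : i = k := by
  rw [mem_Qsub_iff] at hi hk
  have h1 : (i.val % 2 = 1) ↔ (k.val % 2 = 1) := by
    constructor <;> intro h <;> by_contra h' <;>
      [ (rw [if_pos h] at hi; rw [if_neg h'] at hk);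
        (rw [if_pos h] at hk; rw [if_neg h'] at hi) ] <;>
      linarith [hi.1.1, hi.1.2, hk.1.1, hk.1.2]
  have h2 : (2 ≤ i.val) ↔ (2 ≤ k.val) := by
    constructor <;> intro h <;> by_contra h' <;>
      [ (rw [if_pos h] at hi; rw [if_neg h'] at hk);
        (rw [if_pos h] at hk; rw [if_neg h'] at hi) ] <;>
      linarith [hi.2.1, hi.2.2, hk.2.1, hk.2.2]
  have := i.isLt; have := k.isLt
  ext; omega

lemma Qseq_subset_unitSq (l : List (Fin 4)) : Qseq l ⊆ unitSq := by
  induction l with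
  | nil => exact le_refl _
  | cons i tl ih =>
    intro x hx
    obtain ⟨y, hy, rfl⟩ := hx
    exact Qsub_subset_unitSq i ⟨y, ih hy, rfl⟩

/-- Part (i) of the explicit-formula lemma: the iterate `u_n` equals
`Σ_{j=1}^{n} i_j·4^{−j}` on the dyadic square `Q_{i₁,…,i_n}`; in particular `u_n` is
constant on each half-open dyadic square of side `2^{−n}` in `[0,1)²`. -/
theorem stmt8 (l : List (Fin 4)) (x : ℝ × ℝ) (hx : x ∈ Qseq l) :
    uIter l.length x = ∑ j : Fin l.length, ((l.get j).val : ℝ) / 4 ^ ((j : ℕ) + 1) := by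
  induction l generalizing x with
  | nil => simp [uIter, Qseq]
  | cons i tl ih =>
    obtain ⟨y, hy, rfl⟩ := hx
    have hyU : y ∈ unitSq := Qseq_subset_unitSq tl hy
    have hxQ : Bmap i y ∈ Qsub i := ⟨y, hyU, rfl⟩
    have hxU : Bmap i y ∈ unitSq := Qsub_subset_unitSq i hxQ
    have hnot : ∀ k : Fin 4, k ≠ i → Bmap i y ∉ Qsub k := fun k hk h =>
      hk (Qsub_eq_of_mem h hxQ)
    have hub : ubar (Bmap i y) = (i.val : ℝ) / 4 := by
      rw [ubar, Finset.sum_eq_single i]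
      · rw [Set.indicator_of_mem hxQ, mul_one]
      · intro k _ hk
        rw [Set.indicator_of_notMem (hnot k hk), mul_zero]
      · simp
    have hsum : ∑ k : Fin 4, (Qsub k).indicator (fun z => uIter tl.length (Amap k z))
        (Bmap i y) = uIter tl.length y := by
      rw [Finset.sum_eq_single i]
      · rw [Set.indicator_of_mem hxQ, Amap_Bmap]
      · intro k _ hk
        exact Set.indicator_of_notMem (hnot k hk) _
      · simp
    show Lop (uIter tl.length) (Bmap i y) = _
    rw [Lop, Set.indicator_of_mem hxU, hub, hsum, ih y hy]
    simp only [List.length_cons]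
    rw [Fin.sum_univ_succ]
    simp only [List.get_cons_zero, Fin.val_zero, pow_one, List.get_cons_succ,
      Fin.val_succ, Finset.mul_sum]
    congr 1
    · norm_num
    · apply Finset.sum_congr rfl
      intro j _
      have : ((i :: tl).get j.succ) = tl.get j := rfl
      rw [this, pow_succ]
      ring
end

section
/- Let u(x) := Σ_{j=1}^{∞} i_j(x)·4^{−j} on [0,1)². Then for every t ∈ [0,1) and every n ≥ 1, there exists h₀ > 0 such that for all h with 0 < h < h₀, the set { x ∈ [0,1)² : t ≤ u(x) ≤ t + h } is contained in the dyadic square Q_{t₁,…,t_n}, where t_j := ⌊4^j t⌋ − 4⌊4^{j−1} t⌋ are the base-4 digits of t. One may take h₀ := Σ_{j=1}^{n} t_j·4^{−j} + 4^{−n} − t > 0. -/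
open MeasureTheory Set Filter
open scoped ENNReal NNReal

private lemma floor_two_mul_aux (y : ℝ) : 0 ≤ ⌊2*y⌋ - 2*⌊y⌋ ∧ ⌊2*y⌋ - 2*⌊y⌋ ≤ 1 := by
  have h1 : 2*⌊y⌋ ≤ ⌊2*y⌋ := by
    apply Int.le_floor.mpr; push_cast; linarith [Int.floor_le y]
  have h2 : ⌊2*y⌋ < 2*⌊y⌋ + 2 := by
    apply Int.floor_lt.mpr; push_cast; linarith [Int.lt_floor_add_one y]
  omega

lemma bdigit_bounds (s : ℝ) (j : ℕ) : 0 ≤ bdigit (j+1) s ∧ bdigit (j+1) s ≤ 1 := by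
  have h := floor_two_mul_aux ((2:ℝ)^j * s)
  have e : (2:ℝ)^(j+1) * s = 2 * ((2:ℝ)^j*s) := by ring
  simp only [bdigit, Nat.add_sub_cancel, e]
  exact h

lemma tele2 (s : ℝ) (n m : ℕ) :
    ∑ j ∈ Finset.range m, ((bdigit (n+j+1) s : ℝ))/2^(n+j+1)
      = (⌊(2:ℝ)^(n+m)*s⌋:ℝ)/2^(n+m) - (⌊(2:ℝ)^n*s⌋:ℝ)/2^n := by
  induction m with
  | zero => simp
  | succ m ih =>
    rw [Finset.sum_range_succ, ih]
    simp only [bdigit, Nat.add_sub_cancel]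
    have h1 : (2:ℝ)^(n+m) ≠ 0 := by positivity
    have h2 : (2:ℝ)^n ≠ 0 := by positivity
    rw [show n + (m+1) = (n+m)+1 from by omega, pow_succ]
    push_cast
    field_simp
    ring

lemma tele4 (t : ℝ) (m : ℕ) :
    ∑ j ∈ Finset.range m, ((tdigit (j+1) t : ℝ))/4^(j+1)
      = (⌊(4:ℝ)^m*t⌋:ℝ)/4^m - (⌊t⌋:ℝ) := by
  induction m with
  | zero => simp
  | succ m ih =>
    rw [Finset.sum_range_succ, ih]
    simp only [tdigit, Nat.add_sub_cancel]
    have h1 : (4:ℝ)^m ≠ 0 := by positivity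
    rw [pow_succ]
    push_cast
    field_simp
    ring
open Topology

lemma floor_div_pow_tendsto (s : ℝ) (n : ℕ) :
    Tendsto (fun m : ℕ => (⌊(2:ℝ)^(n+m)*s⌋:ℝ)/2^(n+m)) atTop (𝓝 s) := by
  have hl : Tendsto (fun m : ℕ => s - (1/2:ℝ)^(n+m)) atTop (𝓝 s) := by
    have h0 : Tendsto (fun m : ℕ => ((1:ℝ)/2)^m) atTop (𝓝 0) :=
      tendsto_pow_atTop_nhds_zero_of_lt_one (by norm_num) (by norm_num)
    have h2 : Tendsto (fun m : ℕ => (1/2:ℝ)^(n+m)) atTop (𝓝 0) := by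
      simpa [pow_add] using h0.const_mul ((1/2:ℝ)^n)
    simpa using tendsto_const_nhds.sub h2
  refine tendsto_of_tendsto_of_tendsto_of_le_of_le hl tendsto_const_nhds ?_ ?_
  · intro m
    have hp : (0:ℝ) < 2^(n+m) := by positivity
    have h := Int.lt_floor_add_one ((2:ℝ)^(n+m)*s)
    rw [sub_le_iff_le_add, div_add' _ _ _ hp.ne', le_div_iff₀ hp]
    have e : (1/2:ℝ)^(n+m) * 2^(n+m) = 1 := by
      rw [div_pow, one_pow, div_mul_cancel₀]; exact hp.ne'
    nlinarith
  · intro m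
    have hp : (0:ℝ) < 2^(n+m) := by positivity
    rw [div_le_iff₀ hp, mul_comm]
    exact Int.floor_le _

lemma hasSum_bin_tail (s : ℝ) (n : ℕ) :
    HasSum (fun j : ℕ => ((bdigit (n+j+1) s : ℝ))/2^(n+j+1))
      (s - (⌊(2:ℝ)^n*s⌋:ℝ)/2^n) := by
  rw [hasSum_iff_tendsto_nat_of_nonneg]
  · have he : (fun m : ℕ => ∑ j ∈ Finset.range m, ((bdigit (n+j+1) s : ℝ))/2^(n+j+1))
        = fun m => (⌊(2:ℝ)^(n+m)*s⌋:ℝ)/2^(n+m) - (⌊(2:ℝ)^n*s⌋:ℝ)/2^n := funext (tele2 s n)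
    rw [he]
    exact (floor_div_pow_tendsto s n).sub tendsto_const_nhds
  · intro i
    have := (bdigit_bounds s (n+i)).1
    have h0 : (0:ℝ) ≤ ((bdigit (n+i+1) s : ℝ)) := by exact_mod_cast this
    positivity

lemma geom_tail {r : ℝ} (h0 : 0 ≤ r) (h1 : r < 1) (n : ℕ) :
    HasSum (fun j : ℕ => r^(n+j+1)) (r^(n+1)*(1-r)⁻¹) := by
  have h := (hasSum_geometric_of_lt_one h0 h1).mul_left (r^(n+1))
  have he : (fun j : ℕ => r^(n+1) * r^j) = fun j => r^(n+j+1) := by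
    funext j; rw [← pow_add]; congr 1; omega
  rwa [he] at h

lemma geom2 (n : ℕ) : HasSum (fun j : ℕ => (1:ℝ)/2^(n+j+1)) (1/2^n) := by
  have h := geom_tail (r := 1/2) (by norm_num) (by norm_num) n
  have he : (fun j : ℕ => ((1:ℝ)/2)^(n+j+1)) = fun j => (1:ℝ)/2^(n+j+1) := by
    funext j; rw [div_pow, one_pow]
  have hc : ((1:ℝ)/2)^(n+1)*(1-1/2)⁻¹ = 1/2^n := by
    rw [div_pow, one_pow, pow_succ]
    have : (2:ℝ)^n ≠ 0 := by positivity
    field_simp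
    ring
  rwa [he, hc] at h

lemma geom4 (n : ℕ) : HasSum (fun j : ℕ => (1:ℝ)/4^(n+j+1)) (1/(3*4^n)) := by
  have h := geom_tail (r := 1/4) (by norm_num) (by norm_num) n
  have he : (fun j : ℕ => ((1:ℝ)/4)^(n+j+1)) = fun j => (1:ℝ)/4^(n+j+1) := by
    funext j; rw [div_pow, one_pow]
  have hc : ((1:ℝ)/4)^(n+1)*(1-1/4)⁻¹ = 1/(3*4^n) := by
    rw [div_pow, one_pow, pow_succ]
    have : (4:ℝ)^n ≠ 0 := by positivity
    field_simp
    ring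
  rwa [he, hc] at h
lemma sum4 (s : ℝ) (n : ℕ) :
    Summable (fun j : ℕ => ((bdigit (n+j+1) s : ℝ))/4^(n+j+1)) := by
  refine Summable.of_nonneg_of_le (fun j => ?_) (fun j => ?_) (geom4 n).summable
  · have := (bdigit_bounds s (n+j)).1
    have h0 : (0:ℝ) ≤ ((bdigit (n+j+1) s : ℝ)) := by exact_mod_cast this
    positivity
  · have := (bdigit_bounds s (n+j)).2
    have h1 : ((bdigit (n+j+1) s : ℝ)) ≤ 1 := by exact_mod_cast this
    have hp : (0:ℝ) < 4^(n+j+1) := by positivity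
    gcongr

lemma tail4_le (s : ℝ) (n : ℕ) :
    ∑' j : ℕ, ((bdigit (n+j+1) s : ℝ))/4^(n+j+1) ≤ 1/(3*4^n) := by
  rw [← (geom4 n).tsum_eq]
  refine Summable.tsum_le_tsum (fun j => ?_) (sum4 s n) (geom4 n).summable
  have := (bdigit_bounds s (n+j)).2
  have h1 : ((bdigit (n+j+1) s : ℝ)) ≤ 1 := by exact_mod_cast this
  have hp : (0:ℝ) < 4^(n+j+1) := by positivity
  gcongr

lemma tail4_lt (s : ℝ) (n : ℕ) :
    ∑' j : ℕ, ((bdigit (n+j+1) s : ℝ))/4^(n+j+1) < 1/(3*4^n) := by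
  rcases lt_or_eq_of_le (tail4_le s n) with h | h
  · exact h
  exfalso
  have hg : ∀ j : ℕ, (0:ℝ) ≤ 1/4^(n+j+1) - ((bdigit (n+j+1) s : ℝ))/4^(n+j+1) := by
    intro j
    have := (bdigit_bounds s (n+j)).2
    have h1 : ((bdigit (n+j+1) s : ℝ)) ≤ 1 := by exact_mod_cast this
    have hp : (0:ℝ) < 4^(n+j+1) := by positivity
    have : ((bdigit (n+j+1) s : ℝ))/4^(n+j+1) ≤ 1/4^(n+j+1) := by gcongr
    linarith
  have hsub : Summable (fun j : ℕ => (1:ℝ)/4^(n+j+1) - ((bdigit (n+j+1) s : ℝ))/4^(n+j+1)) :=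
    (geom4 n).summable.sub (sum4 s n)
  have htot : ∑' j : ℕ, ((1:ℝ)/4^(n+j+1) - ((bdigit (n+j+1) s : ℝ))/4^(n+j+1)) = 0 := by
    rw [Summable.tsum_sub (geom4 n).summable (sum4 s n), (geom4 n).tsum_eq, h, sub_self]
  have hall : ∀ j : ℕ, bdigit (n+j+1) s = 1 := by
    intro j
    have h1 := Summable.le_tsum hsub j (fun i _ => hg i)
    rw [htot] at h1
    have h2 := hg j
    have h3 : ((bdigit (n+j+1) s : ℝ))/4^(n+j+1) = 1/4^(n+j+1) := by linarith
    have hp : (4:ℝ)^(n+j+1) ≠ 0 := by positivity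
    field_simp at h3
    exact_mod_cast h3
  have hbin := hasSum_bin_tail s n
  rw [show (fun j : ℕ => ((bdigit (n+j+1) s : ℝ))/2^(n+j+1)) = fun j => (1:ℝ)/2^(n+j+1)
    from funext fun j => by rw [hall j]; norm_num] at hbin
  have heq := hbin.unique (geom2 n)
  have hp : (0:ℝ) < 2^n := by positivity
  have hlt : s - (⌊(2:ℝ)^n*s⌋:ℝ)/2^n < 1/2^n := by
    have hf := Int.lt_floor_add_one ((2:ℝ)^n*s)
    rw [sub_lt_iff_lt_add, ← add_div, lt_div_iff₀ hp, mul_comm]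
    push_cast
    linarith
  rw [heq] at hlt
  exact lt_irrefl _ hlt

lemma qdigit_bounds (x : ℝ × ℝ) (j : ℕ) : 0 ≤ qdigit (j+1) x ∧ qdigit (j+1) x ≤ 3 := by
  have h1 := bdigit_bounds x.1 j
  have h2 := bdigit_bounds x.2 j
  unfold qdigit
  omega

lemma qdigit_cast (x : ℝ × ℝ) (k : ℕ) :
    ((qdigit (k+1) x : ℝ)) = ((bdigit (k+1) x.1 : ℝ)) + 2*((bdigit (k+1) x.2 : ℝ)) := by
  unfold qdigit; push_cast; ring

lemma qtail_summable (x : ℝ × ℝ) (m : ℕ) :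
    Summable (fun j : ℕ => ((qdigit (m+j+1) x : ℝ))/4^(m+j+1)) := by
  have he : (fun j : ℕ => ((qdigit (m+j+1) x : ℝ))/4^(m+j+1))
      = fun j => ((bdigit (m+j+1) x.1 : ℝ))/4^(m+j+1) + 2*(((bdigit (m+j+1) x.2 : ℝ))/4^(m+j+1)) := by
    funext j; rw [qdigit_cast x (m+j)]; ring
  rw [he]
  exact (sum4 x.1 m).add ((sum4 x.2 m).mul_left 2)

lemma uFM_bounds (x : ℝ × ℝ) (n : ℕ) :
    (∑ j ∈ Finset.range n, ((qdigit (j+1) x : ℝ))/4^(j+1))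
      ≤ (∑' j : ℕ, ((qdigit (j+1) x : ℝ))/4^(j+1)) ∧
    (∑' j : ℕ, ((qdigit (j+1) x : ℝ))/4^(j+1))
      < (∑ j ∈ Finset.range n, ((qdigit (j+1) x : ℝ))/4^(j+1)) + 1/4^n := by
  have hq0 : Summable (fun j : ℕ => ((qdigit (j+1) x : ℝ))/4^(j+1)) := by
    have := qtail_summable x 0
    simpa using this
  have hsplit := Summable.sum_add_tsum_nat_add (f := fun j : ℕ => ((qdigit (j+1) x : ℝ))/4^(j+1)) n hq0
  have htail_eq : (∑' j : ℕ, ((qdigit (j+n+1) x : ℝ))/4^(j+n+1))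
      = ∑' j : ℕ, ((qdigit (n+j+1) x : ℝ))/4^(n+j+1) := by
    refine tsum_congr fun j => ?_
    rw [add_comm j n]
  have hsplit' : (∑ j ∈ Finset.range n, ((qdigit (j+1) x : ℝ))/4^(j+1))
      + (∑' j : ℕ, ((qdigit (n+j+1) x : ℝ))/4^(n+j+1))
      = ∑' j : ℕ, ((qdigit (j+1) x : ℝ))/4^(j+1) := by
    rw [← htail_eq]; exact hsplit
  have htail_nonneg : 0 ≤ ∑' j : ℕ, ((qdigit (n+j+1) x : ℝ))/4^(n+j+1) := by
    refine tsum_nonneg fun j => ?_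
    have := (qdigit_bounds x (n+j)).1
    have h0 : (0:ℝ) ≤ ((qdigit (n+j+1) x : ℝ)) := by exact_mod_cast this
    positivity
  have htail_lt : (∑' j : ℕ, ((qdigit (n+j+1) x : ℝ))/4^(n+j+1)) < 1/4^n := by
    have he : (fun j : ℕ => ((qdigit (n+j+1) x : ℝ))/4^(n+j+1))
        = fun j => ((bdigit (n+j+1) x.1 : ℝ))/4^(n+j+1) + 2*(((bdigit (n+j+1) x.2 : ℝ))/4^(n+j+1)) := by
      funext j; rw [qdigit_cast x (n+j)]; ring
    rw [he, Summable.tsum_add (sum4 x.1 n) ((sum4 x.2 n).mul_left 2), tsum_mul_left]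
    have h1 := tail4_lt x.1 n
    have h2 := tail4_le x.2 n
    have h3 : (1:ℝ)/(3*4^n)*3 = 1/4^n := by
      have : (4:ℝ)^n ≠ 0 := by positivity
      field_simp
    linarith
  constructor
  · linarith
  · linarith
lemma exists_int_partial (x : ℝ × ℝ) (k : ℕ) :
    ∃ m : ℤ, (m:ℝ) = 4^k * ∑ j ∈ Finset.range k, ((qdigit (j+1) x : ℝ))/4^(j+1) := by
  induction k with
  | zero => exact ⟨0, by simp⟩
  | succ k ih =>
    obtain ⟨m, hm⟩ := ih
    refine ⟨4*m + qdigit (k+1) x, ?_⟩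
    rw [Finset.sum_range_succ, mul_add]
    have hp : (4:ℝ)^(k+1) ≠ 0 := by positivity
    have h4 : (4:ℝ)^(k+1)*(((qdigit (k+1) x : ℝ))/4^(k+1)) = ((qdigit (k+1) x : ℝ)) := by
      field_simp
    rw [h4, pow_succ]
    push_cast
    rw [mul_comm ((4:ℝ)^k) 4, mul_assoc, ← hm]

lemma floor_mono4 (t : ℝ) {k n : ℕ} (hk : k ≤ n) :
    ((⌊(4:ℝ)^n*t⌋:ℝ)+1)/4^n ≤ ((⌊(4:ℝ)^k*t⌋:ℝ)+1)/4^k := by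
  have hp : (0:ℝ) < 4^k := by positivity
  have hpn : (0:ℝ) < 4^n := by positivity
  have hpow : (4:ℝ)^(n-k) * 4^k = 4^n := by rw [← pow_add, Nat.sub_add_cancel hk]
  have hpos : (0:ℝ) < 4^(n-k) := by positivity
  have h1 : (4:ℝ)^n * t < (4:ℝ)^(n-k) * ((⌊(4:ℝ)^k*t⌋:ℝ)+1) := by
    have hf := Int.lt_floor_add_one ((4:ℝ)^k*t)
    calc (4:ℝ)^n*t = 4^(n-k) * (4^k*t) := by rw [← hpow]; ring
    _ < _ := by exact mul_lt_mul_of_pos_left hf hpos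
  have h2 : ⌊(4:ℝ)^n*t⌋ < (4:ℤ)^(n-k) * (⌊(4:ℝ)^k*t⌋+1) := by
    apply Int.floor_lt.mpr; push_cast; exact h1
  have h3 : (⌊(4:ℝ)^n*t⌋:ℝ) + 1 ≤ (4:ℝ)^(n-k) * ((⌊(4:ℝ)^k*t⌋:ℝ)+1) := by
    have := Int.add_one_le_iff.mpr h2
    exact_mod_cast this
  rw [div_le_div_iff₀ hpn hp]
  calc ((⌊(4:ℝ)^n*t⌋:ℝ)+1)*4^k ≤ ((4:ℝ)^(n-k) * ((⌊(4:ℝ)^k*t⌋:ℝ)+1))*4^k :=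
        mul_le_mul_of_nonneg_right h3 hp.le
  _ = ((⌊(4:ℝ)^k*t⌋:ℝ)+1)*4^n := by rw [← hpow]; ring

lemma bdigit_shift (s : ℝ) (b : ℤ) (j : ℕ) : bdigit (j+1) (2*s - (b:ℝ)) = bdigit (j+2) s := by
  simp only [bdigit, show j+1-1 = j from rfl, show j+2-1 = j+1 from rfl]
  have e1 : (2:ℝ)^(j+1) * (2*s - (b:ℝ)) = (2:ℝ)^(j+2)*s - (((2^(j+1)*b : ℤ)):ℝ) := by
    push_cast; ring
  have e2 : (2:ℝ)^j * (2*s - (b:ℝ)) = (2:ℝ)^(j+1)*s - (((2^j*b : ℤ)):ℝ) := by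
    push_cast; ring
  rw [e1, e2, Int.floor_sub_intCast, Int.floor_sub_intCast]
  ring

lemma bdigit_one (s : ℝ) (hs : s ∈ Set.Ico (0:ℝ) 1) :
    bdigit 1 s = ⌊2*s⌋ ∧ (bdigit 1 s = 0 ∨ bdigit 1 s = 1) := by
  have h0 : ⌊s⌋ = 0 := Int.floor_eq_zero_iff.mpr hs
  have he : bdigit 1 s = ⌊2*s⌋ := by
    simp [bdigit, h0]
  refine ⟨he, ?_⟩
  have := floor_two_mul_aux s
  omega
lemma memQ (l : List (Fin 4)) : ∀ x : ℝ × ℝ, x ∈ unitSq →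
    (∀ j : Fin l.length, qdigit ((j:ℕ)+1) x = ((l.get j).val : ℤ)) → x ∈ Qseq l := by
  induction l with
  | nil => intro x hx _; exact hx
  | cons i l ih =>
    intro x hx hd
    have hx1 : x.1 ∈ Set.Ico (0:ℝ) 1 := hx.1
    have hx2 : x.2 ∈ Set.Ico (0:ℝ) 1 := hx.2
    obtain ⟨hb1, hc1⟩ := bdigit_one x.1 hx1
    obtain ⟨hb2, hc2⟩ := bdigit_one x.2 hx2
    have h0 := hd ⟨0, by simp⟩
    have hq1 : bdigit 1 x.1 + 2 * bdigit 1 x.2 = (i.val : ℤ) := by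
      simpa [qdigit] using h0
    have hival : i.val < 4 := i.isLt
    have hm : (i.val % 2 = 1 ∧ bdigit 1 x.1 = 1) ∨ (¬ (i.val % 2 = 1) ∧ bdigit 1 x.1 = 0) := by
      omega
    have hv : (2 ≤ i.val ∧ bdigit 1 x.2 = 1) ∨ (¬ (2 ≤ i.val) ∧ bdigit 1 x.2 = 0) := by
      omega
    have hA1 : (Amap i x).1 = 2*x.1 - ((bdigit 1 x.1 : ℤ):ℝ) := by
      rcases hm with ⟨h, h'⟩ | ⟨h, h'⟩ <;> simp [Amap, h, h']
    have hA2 : (Amap i x).2 = 2*x.2 - ((bdigit 1 x.2 : ℤ):ℝ) := by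
      rcases hv with ⟨h, h'⟩ | ⟨h, h'⟩ <;> simp [Amap, h, h']
    have hyU : Amap i x ∈ unitSq := by
      constructor
      · rw [hA1, hb1]
        constructor
        · have := Int.floor_le (2*x.1); linarith
        · have := Int.lt_floor_add_one (2*x.1); linarith
      · rw [hA2, hb2]
        constructor
        · have := Int.floor_le (2*x.2); linarith
        · have := Int.lt_floor_add_one (2*x.2); linarith
    have hydig : ∀ j : Fin l.length, qdigit ((j:ℕ)+1) (Amap i x) = ((l.get j).val : ℤ) := by
      intro j
      have hj := hd ⟨(j:ℕ)+1, by simpa using Nat.succ_lt_succ j.isLt⟩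
      have hget : ((i :: l).get ⟨(j:ℕ)+1, by simpa using Nat.succ_lt_succ j.isLt⟩) = l.get j := rfl
      rw [hget] at hj
      have : qdigit ((j:ℕ)+1) (Amap i x) = qdigit ((j:ℕ)+2) x := by
        unfold qdigit
        rw [hA1, hA2, bdigit_shift, bdigit_shift]
      rw [this]
      exact hj
    have hBA : Bmap i (Amap i x) = x := by
      refine Prod.ext ?_ ?_ <;> simp only [Bmap, Amap] <;> split_ifs <;> ring
    exact ⟨Amap i x, ih (Amap i x) hyU hydig, hBA⟩
/-- For `t ∈ [0,1)` and `n ≥ 1`, with `h₀ := Σ_{j=1}^{n} t_j 4^{−j} + 4^{−n} − t > 0`,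
for all `0 < h < h₀` the band `{ x ∈ [0,1)² : t ≤ u(x) ≤ t + h }` is contained in the
dyadic square indexed by the first `n` base-4 digits of `t`. -/
theorem stmt17 (t : ℝ) (ht : t ∈ Set.Ico (0:ℝ) 1) (n : ℕ) (hn : 1 ≤ n) :
    0 < (∑ j : Fin n, (tdigit ((j : ℕ) + 1) t : ℝ) / 4 ^ ((j : ℕ) + 1)) + 1 / 4 ^ n - t ∧
    ∀ h : ℝ, 0 < h →
      h < (∑ j : Fin n, (tdigit ((j : ℕ) + 1) t : ℝ) / 4 ^ ((j : ℕ) + 1)) + 1 / 4 ^ n - t →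
      ∀ l : List (Fin 4), l.length = n →
        (∀ j : Fin l.length, ((l.get j).val : ℤ) = tdigit ((j : ℕ) + 1) t) →
        {x ∈ unitSq | t ≤ uFM x ∧ uFM x ≤ t + h} ⊆ Qseq l := by
  have hfl0 : ⌊t⌋ = 0 := Int.floor_eq_zero_iff.mpr ht
  have hfin : (∑ j : Fin n, (tdigit ((j : ℕ) + 1) t : ℝ) / 4 ^ ((j : ℕ) + 1))
      = (⌊(4:ℝ)^n*t⌋:ℝ)/4^n := by
    rw [Fin.sum_univ_eq_sum_range (fun j => ((tdigit (j+1) t : ℝ))/4^(j+1)) n, tele4, hfl0]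
    simp
  have hpn : (0:ℝ) < 4^n := by positivity
  have hfn := Int.lt_floor_add_one ((4:ℝ)^n*t)
  have hpos : 0 < (∑ j : Fin n, (tdigit ((j : ℕ) + 1) t : ℝ) / 4 ^ ((j : ℕ) + 1)) + 1 / 4 ^ n - t := by
    rw [hfin]
    have h1 : t < ((⌊(4:ℝ)^n*t⌋:ℝ)+1)/4^n := by
      rw [lt_div_iff₀ hpn, mul_comm]; linarith
    have e : ((⌊(4:ℝ)^n*t⌋:ℝ))/4^n + 1/4^n = ((⌊(4:ℝ)^n*t⌋:ℝ)+1)/4^n := by ring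
    linarith
  refine ⟨hpos, ?_⟩
  intro h hh0 hh1 l hlen hdig x hx
  obtain ⟨hxU, ht1, ht2⟩ := hx
  rw [hfin] at hh1
  have hu : uFM x = ∑' j : ℕ, ((qdigit (j+1) x : ℝ))/4^(j+1) := Set.indicator_of_mem hxU _
  -- partial sums of t equal floors
  have hS : ∀ m : ℕ, ∑ j ∈ Finset.range m, ((tdigit (j+1) t : ℝ))/4^(j+1)
      = (⌊(4:ℝ)^m*t⌋:ℝ)/4^m := by
    intro m; rw [tele4, hfl0]; simp
  -- for every k ≤ n the q-partial sum equals the t-partial sum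
  have hPS : ∀ k : ℕ, k ≤ n →
      (∑ j ∈ Finset.range k, ((qdigit (j+1) x : ℝ))/4^(j+1)) = (⌊(4:ℝ)^k*t⌋:ℝ)/4^k := by
    intro k hk
    have hpk : (0:ℝ) < 4^k := by positivity
    obtain ⟨m, hm⟩ := exists_int_partial x k
    have hP : (∑ j ∈ Finset.range k, ((qdigit (j+1) x : ℝ))/4^(j+1)) = (m:ℝ)/4^k := by
      rw [hm, mul_div_cancel_left₀ _ hpk.ne']
    obtain ⟨hPl, hPu⟩ := uFM_bounds x k
    rw [← hu] at hPl hPu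
    have hSl : (⌊(4:ℝ)^k*t⌋:ℝ)/4^k ≤ t := by
      rw [div_le_iff₀ hpk, mul_comm]; exact Int.floor_le _
    have hmono := floor_mono4 t hk
    have hupper : uFM x < ((⌊(4:ℝ)^k*t⌋:ℝ)+1)/4^k := by
      have e : ((⌊(4:ℝ)^n*t⌋:ℝ))/4^n + 1/4^n = ((⌊(4:ℝ)^n*t⌋:ℝ)+1)/4^n := by ring
      linarith
    -- m ≤ ⌊4^k t⌋
    have h1 : (m:ℝ)/4^k < ((⌊(4:ℝ)^k*t⌋:ℝ)+1)/4^k := by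
      rw [← hP]; linarith
    have h1' : m ≤ ⌊(4:ℝ)^k*t⌋ := by
      have := (div_lt_div_iff_of_pos_right hpk).mp h1
      have : m < ⌊(4:ℝ)^k*t⌋ + 1 := by exact_mod_cast this
      omega
    -- ⌊4^k t⌋ ≤ m
    have h2 : (⌊(4:ℝ)^k*t⌋:ℝ)/4^k < ((m:ℝ)+1)/4^k := by
      have e : ((m:ℝ))/4^k + 1/4^k = ((m:ℝ)+1)/4^k := by ring
      rw [hP] at hPu
      linarith
    have h2' : ⌊(4:ℝ)^k*t⌋ ≤ m := by
      have := (div_lt_div_iff_of_pos_right hpk).mp h2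
      have : ⌊(4:ℝ)^k*t⌋ < m + 1 := by exact_mod_cast this
      omega
    have : m = ⌊(4:ℝ)^k*t⌋ := le_antisymm h1' h2'
    rw [hP, this]
  -- digits agree
  have hdigx : ∀ k : ℕ, k < n → qdigit (k+1) x = tdigit (k+1) t := by
    intro k hk
    have hpk1 : (0:ℝ) < 4^(k+1) := by positivity
    have e1 := hPS k hk.le
    have e2 := hPS (k+1) hk
    have hq := Finset.sum_range_succ (fun j => ((qdigit (j+1) x : ℝ))/4^(j+1)) k
    have ht' := Finset.sum_range_succ (fun j => ((tdigit (j+1) t : ℝ))/4^(j+1)) k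
    have hS1 := hS k
    have hS2 := hS (k+1)
    have hdiv : ((qdigit (k+1) x : ℝ))/4^(k+1) = ((tdigit (k+1) t : ℝ))/4^(k+1) := by
      linarith
    field_simp at hdiv
    exact_mod_cast hdiv
  refine memQ l x hxU fun j => ?_
  have hjn : (j:ℕ) < n := hlen ▸ j.isLt
  rw [hdigx (j:ℕ) hjn]
  exact (hdig j).symm
end
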